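/- For odd n ≥ 3 and k ≥ 0, the unicyclic graph G(n;k,...,k) obtained by attaching exactly k pendant vertices to each vertex of the odd cycle C_n has super edge-magic total strength sm(G(n;k,...,k)) = 2n(k+1) + (n+3)/2. -/

import Mathlib

/-- A super edge-magic total labeling of a graph `G` with `p = Fintype.card V` vertices and
`q = G.edgeSet.ncard` edges: `fv` maps the vertices bijectively onto `{1,…,p}`, `fe` maps the
edges bijectively onto `{p+1,…,p+q}` (so together they form a bijection of `V ∪ E` onto
`{1,…,p+q}` with `f(V) = {1,…,p}`), and every edge `uv` satisfies `f(u)+f(v)+f(uv) = c`. -/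
def IsSEMT {V : Type*} [Fintype V] (G : SimpleGraph V)
    (fv : V → ℕ) (fe : Sym2 V → ℕ) (c : ℕ) : Prop :=
  Set.BijOn fv Set.univ (Set.Icc 1 (Fintype.card V)) ∧
  Set.BijOn fe G.edgeSet
    (Set.Icc (Fintype.card V + 1) (Fintype.card V + G.edgeSet.ncard)) ∧
  ∀ u v, G.Adj u v → fv u + fv v + fe s(u, v) = c

/-- The unicyclic graph `G(n; k₁, …, kₙ)`: a cycle on `Fin n` (vertex `i` adjacent to `i+1 mod n`)
with `k i` pendant vertices attached to the cycle vertex `i`. -/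
def pendantCycle (n : ℕ) (k : Fin n → ℕ) :
    SimpleGraph (Fin n ⊕ Σ i : Fin n, Fin (k i)) :=
  SimpleGraph.fromRel (fun a b =>
    (∃ i j : Fin n, a = Sum.inl i ∧ b = Sum.inl j ∧ (i.val + 1) % n = j.val) ∨
    (∃ (i : Fin n) (j : Fin (k i)), a = Sum.inr ⟨i, j⟩ ∧ b = Sum.inl i))



def aLab (n : ℕ) (i : Fin n) : ℕ :=
  if i.val % 2 = 0 then i.val / 2 + 1 else n / 2 + 1 + (i.val + 1) / 2

def fLab (n x : ℕ) : ℕ := (x + n / 2) % n + 1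

def fvL (n k : ℕ) : (Fin n ⊕ Σ _ : Fin n, Fin k) → ℕ
  | Sum.inl i => aLab n i
  | Sum.inr ⟨i, j⟩ => n + j.val * n + fLab n (aLab n i)

def c0 (n k : ℕ) : ℕ := 2 * n * (k + 1) + (n + 3) / 2

def feL (n k : ℕ) : Sym2 (Fin n ⊕ Σ _ : Fin n, Fin k) → ℕ :=
  Sym2.lift ⟨fun u v => c0 n k - (fvL n k u + fvL n k v),
    fun u v => by dsimp only; rw [Nat.add_comm (fvL n k u)]⟩

/-- successor around the cycle -/
def nxt {n : ℕ} (i : Fin n) : Fin n := ⟨(i.val + 1) % n, Nat.mod_lt _ i.pos⟩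

lemma mod_small {a n : ℕ} (h : a < 2 * n) : a % n = if a < n then a else a - n := by
  split_ifs with h'
  · exact Nat.mod_eq_of_lt h'
  · rw [Nat.mod_eq_sub_mod (le_of_not_gt h'), Nat.mod_eq_of_lt (by omega)]

lemma nxt_val {n : ℕ} (hn : 3 ≤ n) (i : Fin n) :
    (nxt i).val = if i.val + 1 = n then 0 else i.val + 1 := by
  have hi := i.isLt
  show (i.val + 1) % n = _
  rw [mod_small (by omega)]
  split_ifs <;> omega

lemma aLab_mem {n : ℕ} (hn : 3 ≤ n) (ho : n % 2 = 1) (i : Fin n) :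
    1 ≤ aLab n i ∧ aLab n i ≤ n := by
  have := i.isLt
  unfold aLab; split <;> omega

lemma aLab_inj {n : ℕ} (hn : 3 ≤ n) (ho : n % 2 = 1) {i j : Fin n}
    (h : aLab n i = aLab n j) : i = j := by
  have hi := i.isLt; have hj := j.isLt
  apply Fin.ext
  unfold aLab at h
  split at h <;> split at h <;> omega

lemma cyc_sum {n : ℕ} (hn : 3 ≤ n) (ho : n % 2 = 1) (i : Fin n) :
    aLab n i + aLab n (nxt i) = if i.val + 1 = n then n / 2 + 2 else n / 2 + 3 + i.val := by
  have hi := i.isLt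
  have hv := nxt_val hn i
  unfold aLab
  rw [hv]
  split_ifs <;> omega

lemma fLab_eq {n x : ℕ} (hn : 3 ≤ n) (h1 : 1 ≤ x) (h2 : x ≤ n) :
    fLab n x = if x + n / 2 < n then x + n / 2 + 1 else x + n / 2 + 1 - n := by
  unfold fLab
  rw [mod_small (by omega)]
  split_ifs <;> omega

lemma fLab_mem {n x : ℕ} (hn : 3 ≤ n) (h1 : 1 ≤ x) (h2 : x ≤ n) :
    1 ≤ fLab n x ∧ fLab n x ≤ n := by
  rw [fLab_eq hn h1 h2]; split_ifs <;> omega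

lemma fLab_inj {n x y : ℕ} (hn : 3 ≤ n) (hx1 : 1 ≤ x) (hx2 : x ≤ n) (hy1 : 1 ≤ y)
    (hy2 : y ≤ n) (h : fLab n x = fLab n y) : x = y := by
  rw [fLab_eq hn hx1 hx2, fLab_eq hn hy1 hy2] at h
  split_ifs at h <;> omega

lemma s2_mem {n x : ℕ} (hn : 3 ≤ n) (ho : n % 2 = 1) (h1 : 1 ≤ x) (h2 : x ≤ n) :
    n / 2 + 2 ≤ x + fLab n x ∧ x + fLab n x ≤ n + n / 2 + 1 := by
  rw [fLab_eq hn h1 h2]; split_ifs <;> omega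

lemma s2_inj {n x y : ℕ} (hn : 3 ≤ n) (ho : n % 2 = 1) (hx1 : 1 ≤ x) (hx2 : x ≤ n)
    (hy1 : 1 ≤ y) (hy2 : y ≤ n) (h : x + fLab n x = y + fLab n y) : x = y := by
  rw [fLab_eq hn hx1 hx2, fLab_eq hn hy1 hy2] at h
  split_ifs at h <;> omega

lemma block_eq {n j j' v v' : ℕ} (hn : 0 < n) (hv1 : 1 ≤ v) (hv2 : v ≤ n)
    (hv1' : 1 ≤ v') (hv2' : v' ≤ n) (h : j * n + v = j' * n + v') : j = j' ∧ v = v' := by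
  have key : ∀ a b : ℕ, b < n → (a * n + b) / n = a := by
    intro a b hb
    rw [mul_comm, Nat.mul_add_div hn, Nat.div_eq_of_lt hb, Nat.add_zero]
  have h' : j * n + (v - 1) = j' * n + (v' - 1) := by omega
  have hj : j = j' := by
    rw [← key j (v - 1) (by omega), ← key j' (v' - 1) (by omega), h']
  refine ⟨hj, ?_⟩
  subst hj
  exact Nat.add_left_cancel h




section
variable (n k : ℕ)

def cycE (i : Fin n) : Sym2 (Fin n ⊕ Σ _ : Fin n, Fin k) :=
  s(Sum.inl i, Sum.inl (nxt i))

def penE (x : Σ _ : Fin n, Fin k) : Sym2 (Fin n ⊕ Σ _ : Fin n, Fin k) :=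
  s(Sum.inr x, Sum.inl x.1)

def EF : Finset (Sym2 (Fin n ⊕ Σ _ : Fin n, Fin k)) :=
  Finset.univ.image (cycE n k) ∪ Finset.univ.image (penE n k)

variable {n k}

lemma adj_cyc (hn : 3 ≤ n) (i : Fin n) :
    (pendantCycle n fun _ => k).Adj (Sum.inl i) (Sum.inl (nxt i)) := by
  rw [pendantCycle, SimpleGraph.fromRel_adj]
  constructor
  · intro h
    have h2 := Sum.inl.inj h
    have := congrArg Fin.val h2
    rw [nxt_val hn] at this
    have hi := i.isLt
    split_ifs at this <;> omega
  · exact Or.inl (Or.inl ⟨i, nxt i, rfl, rfl, rfl⟩)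

lemma adj_pen (x : Σ _ : Fin n, Fin k) :
    (pendantCycle n fun _ => k).Adj (Sum.inr x) (Sum.inl x.1) := by
  rw [pendantCycle, SimpleGraph.fromRel_adj]
  exact ⟨by simp, Or.inl (Or.inr ⟨x.1, x.2, by simp, rfl⟩)⟩

lemma edgeSet_eq (hn : 3 ≤ n) :
    (pendantCycle n fun _ => k).edgeSet = ↑(EF n k) := by
  apply Set.Subset.antisymm
  · intro e
    induction e using Sym2.ind with
    | _ u v =>
      intro he
      rw [SimpleGraph.mem_edgeSet, pendantCycle, SimpleGraph.fromRel_adj] at he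
      obtain ⟨hne, hrel⟩ := he
      simp only [EF, Finset.coe_union, Finset.coe_image, Finset.coe_univ, Set.image_univ,
        Set.mem_union, Set.mem_range]
      rcases hrel with (⟨i, j, rfl, rfl, hij⟩ | ⟨i, j, rfl, rfl⟩) | (⟨i, j, rfl, rfl, hij⟩ | ⟨i, j, rfl, rfl⟩)
      · left
        have hj : j = nxt i := Fin.ext hij.symm
        subst hj
        exact ⟨i, rfl⟩
      · right; exact ⟨⟨i, j⟩, rfl⟩
      · left
        have hj : j = nxt i := Fin.ext hij.symm
        subst hj
        exact ⟨i, by rw [cycE, Sym2.eq_swap]⟩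
      · right; exact ⟨⟨i, j⟩, by rw [penE, Sym2.eq_swap]⟩
  · intro e he
    simp only [EF, Finset.coe_union, Finset.coe_image, Finset.coe_univ, Set.image_univ,
      Set.mem_union, Set.mem_range] at he
    rcases he with ⟨i, rfl⟩ | ⟨x, rfl⟩
    · rw [cycE]; exact (SimpleGraph.mem_edgeSet _).mpr (adj_cyc hn i)
    · rw [penE]; exact (SimpleGraph.mem_edgeSet _).mpr (adj_pen x)

lemma cycE_inj (hn : 3 ≤ n) : Function.Injective (cycE n k) := by
  intro i i' h
  rw [cycE, cycE, Sym2.eq_iff] at h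
  rcases h with ⟨h1, _⟩ | ⟨h1, h2⟩
  · exact Sum.inl.inj h1
  · have e1 := congrArg Fin.val (Sum.inl.inj h1)
    have e2 := congrArg Fin.val (Sum.inl.inj h2)
    rw [nxt_val hn] at e1 e2
    have hi := i.isLt; have hi' := i'.isLt
    apply Fin.ext
    split_ifs at e1 e2 <;> omega

lemma penE_inj : Function.Injective (penE n k) := by
  intro x x' h
  rw [penE, penE, Sym2.eq_iff] at h
  rcases h with ⟨h1, _⟩ | ⟨h1, _⟩
  · exact Sum.inr.inj h1
  · exact absurd h1 (by simp)

lemma EF_disj : Disjoint (Finset.univ.image (cycE n k)) (Finset.univ.image (penE n k)) := by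
  rw [Finset.disjoint_left]
  intro e he1 he2
  simp only [Finset.mem_image, Finset.mem_univ, true_and] at he1 he2
  obtain ⟨i, hi⟩ := he1
  obtain ⟨x, hx⟩ := he2
  rw [← hx] at hi
  rw [cycE, penE, Sym2.eq_iff] at hi
  rcases hi with ⟨h1, _⟩ | ⟨_, h2⟩ <;> simp_all

lemma card_sigma_fin : Fintype.card (Σ _ : Fin n, Fin k) = n * k := by
  simp [Fintype.card_sigma, Finset.sum_const, mul_comm]

lemma EF_card (hn : 3 ≤ n) : (EF n k).card = n + n * k := by
  rw [EF, Finset.card_union_of_disjoint EF_disj,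
    Finset.card_image_of_injective _ (cycE_inj hn),
    Finset.card_image_of_injective _ penE_inj, Finset.card_univ, Finset.card_univ,
    Fintype.card_fin, card_sigma_fin]

lemma cardV : Fintype.card (Fin n ⊕ Σ _ : Fin n, Fin k) = n + n * k := by
  rw [Fintype.card_sum, Fintype.card_fin, card_sigma_fin]

lemma sum_EF {M : Type*} [AddCommMonoid M] (hn : 3 ≤ n)
    (h : Sym2 (Fin n ⊕ Σ _ : Fin n, Fin k) → M) :
    ∑ e ∈ EF n k, h e = ∑ i : Fin n, h (cycE n k i) + ∑ x : Σ _ : Fin n, Fin k, h (penE n k x) := by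
  rw [EF, Finset.sum_union EF_disj,
    Finset.sum_image (fun a _ b _ hab => cycE_inj hn hab),
    Finset.sum_image (fun a _ b _ hab => penE_inj hab)]

end



lemma bijOn_helper {α β : Type*} (f : α → β) {s : Set α} {t : Set β}
    (hm : Set.MapsTo f s t) (hi : Set.InjOn f s) (ht : t.Finite)
    (hc : t.ncard ≤ s.ncard) : Set.BijOn f s t := by
  have himg : f '' s = t :=
    Set.eq_of_subset_of_ncard_le (hm.image_subset)
      (by rwa [Set.ncard_image_of_injOn hi]) ht
  exact himg ▸ hi.bijOn_image

lemma sum_ge (T : Finset ℕ) (h : ∀ x ∈ T, 1 ≤ x) :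
    T.card * (T.card + 1) ≤ 2 * ∑ x ∈ T, x := by
  induction T using Finset.strongInduction with
  | _ T ih =>
    rcases T.eq_empty_or_nonempty with rfl | hne
    · simp
    · have hmem := T.max'_mem hne
      set M := T.max' hne with hM
      have hMc : T.card ≤ M := by
        have hsub : T ⊆ Finset.Icc 1 M :=
          fun x hx => Finset.mem_Icc.mpr ⟨h x hx, Finset.le_max' T x hx⟩
        calc T.card ≤ (Finset.Icc 1 M).card := Finset.card_le_card hsub
          _ = M := by rw [Nat.card_Icc]; omega
      have ih' := ih (T.erase M) (Finset.erase_ssubset hmem)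
        (fun x hx => h x (Finset.mem_of_mem_erase hx))
      have hcard : (T.erase M).card = T.card - 1 := Finset.card_erase_of_mem hmem
      have hsum : ∑ x ∈ T, x = M + ∑ x ∈ T.erase M, x := by
        rw [← Finset.add_sum_erase T _ hmem]
      have hpos : 1 ≤ T.card := Finset.card_pos.mpr hne
      obtain ⟨b, hb⟩ : ∃ b, T.card = b + 1 := ⟨T.card - 1, by omega⟩
      rw [hb, hsum]
      rw [hcard, hb] at ih'
      simp only [Nat.add_sub_cancel] at ih'
      have key : (b + 1) * (b + 1 + 1) = b * (b + 1) + 2 * (b + 1) := by ring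
      rw [key]
      have : 2 * (b + 1) ≤ 2 * M := by omega
      calc b * (b + 1) + 2 * (b + 1) ≤ 2 * (∑ x ∈ T.erase M, x) + 2 * M := by omega
        _ = 2 * (M + ∑ x ∈ T.erase M, x) := by ring

lemma sum_Ioc_gauss (N : ℕ) : 2 * (∑ x ∈ Finset.Ioc 0 N, x) = N * (N + 1) := by
  have h1 : ∑ x ∈ Finset.Ioc 0 N, x = ∑ x ∈ Finset.range (N + 1), x := by
    rw [Finset.range_eq_Ico]
    apply Finset.sum_subset
    · intro x hx
      rw [Finset.mem_Ioc] at hx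
      rw [Finset.mem_Ico]
      omega
    · intro x hx hx'
      rw [Finset.mem_Ico] at hx
      rw [Finset.mem_Ioc] at hx'
      omega
  rw [h1, mul_comm, Finset.sum_range_id_mul_two]
  simp [Nat.mul_comm]

section
variable {n k : ℕ}

lemma fv_mem (hn : 3 ≤ n) (ho : n % 2 = 1) (x : Fin n ⊕ Σ _ : Fin n, Fin k) :
    1 ≤ fvL n k x ∧ fvL n k x ≤ n + n * k := by
  match x with
  | Sum.inl i =>
    have := aLab_mem hn ho i
    simp only [fvL]
    omega
  | Sum.inr ⟨i, j⟩ =>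
    have hA := aLab_mem hn ho i
    have hF := fLab_mem hn hA.1 hA.2
    have hj : (j.val + 1) * n ≤ k * n := Nat.mul_le_mul_right n j.isLt
    have hkn : k * n = n * k := Nat.mul_comm k n
    have hexp : (j.val + 1) * n = j.val * n + n := by ring
    simp only [fvL]
    omega

lemma fv_inj (hn : 3 ≤ n) (ho : n % 2 = 1) :
    Function.Injective (fvL n k) := by
  intro x y h
  match x, y with
  | Sum.inl i, Sum.inl i' =>
    simp only [fvL] at h
    exact congrArg Sum.inl (aLab_inj hn ho h)
  | Sum.inl i, Sum.inr ⟨i', j'⟩ =>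
    exfalso
    have hA := aLab_mem hn ho i
    have hA' := aLab_mem hn ho i'
    have hF := fLab_mem hn hA'.1 hA'.2
    simp only [fvL] at h
    omega
  | Sum.inr ⟨i, j⟩, Sum.inl i' =>
    exfalso
    have hA := aLab_mem hn ho i
    have hA' := aLab_mem hn ho i'
    have hF := fLab_mem hn hA.1 hA.2
    simp only [fvL] at h
    omega
  | Sum.inr ⟨i, j⟩, Sum.inr ⟨i', j'⟩ =>
    simp only [fvL] at h
    have hA := aLab_mem hn ho i
    have hA' := aLab_mem hn ho i'
    have hF := fLab_mem hn hA.1 hA.2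
    have hF' := fLab_mem hn hA'.1 hA'.2
    have h' : j.val * n + fLab n (aLab n i) = j'.val * n + fLab n (aLab n i') := by omega
    obtain ⟨hj, hv⟩ := block_eq (by omega) hF.1 hF.2 hF'.1 hF'.2 h'
    have hii : i = i' := aLab_inj hn ho (fLab_inj hn hA.1 hA.2 hA'.1 hA'.2 hv)
    subst hii
    have : j = j' := Fin.ext hj
    subst this
    rfl

lemma fv_bijOn (hn : 3 ≤ n) (ho : n % 2 = 1) :
    Set.BijOn (fvL n k) Set.univ (Set.Icc 1 (n + n * k)) := by
  apply bijOn_helper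
  · intro x _
    exact Set.mem_Icc.mpr (fv_mem hn ho x)
  · exact (fv_inj hn ho).injOn
  · exact Set.finite_Icc _ _
  · rw [← Finset.coe_Icc, Set.ncard_coe_finset, Nat.card_Icc, Set.ncard_univ,
      Nat.card_eq_fintype_card, cardV]
    omega

lemma hc0 (hn : 3 ≤ n) (ho : n % 2 = 1) : c0 n k = 2 * (n + n * k) + n / 2 + 2 := by
  have h : 2 * n * (k + 1) = 2 * (n + n * k) := by ring
  unfold c0
  omega

lemma feL_mk (u v : Fin n ⊕ Σ _ : Fin n, Fin k) :
    feL n k s(u, v) = c0 n k - (fvL n k u + fvL n k v) := rfl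

lemma EF_cases {e : Sym2 (Fin n ⊕ Σ _ : Fin n, Fin k)} (he : e ∈ EF n k) :
    (∃ i, e = cycE n k i) ∨ (∃ x, e = penE n k x) := by
  rw [EF, Finset.mem_union] at he
  rcases he with he | he <;>
    simp only [Finset.mem_image, Finset.mem_univ, true_and] at he
  · exact Or.inl (by obtain ⟨i, hi⟩ := he; exact ⟨i, hi.symm⟩)
  · exact Or.inr (by obtain ⟨x, hx⟩ := he; exact ⟨x, hx.symm⟩)

lemma fe_cyc_val (hn : 3 ≤ n) (ho : n % 2 = 1) (i : Fin n) :
    feL n k (cycE n k i) =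
      c0 n k - (if i.val + 1 = n then n / 2 + 2 else n / 2 + 3 + i.val) := by
  rw [cycE, feL_mk]
  simp only [fvL]
  rw [cyc_sum hn ho]

lemma fe_pen_val (hn : 3 ≤ n) (ho : n % 2 = 1) (x : Σ _ : Fin n, Fin k) :
    feL n k (penE n k x) =
      c0 n k - (n + x.2.val * n + (aLab n x.1 + fLab n (aLab n x.1))) := by
  rw [penE, feL_mk]
  simp only [fvL]
  congr 1
  omega

end
section
variable {n k : ℕ}

lemma pen_sum_bounds (hn : 3 ≤ n) (ho : n % 2 = 1) (x : Σ _ : Fin n, Fin k) :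
    n + n / 2 + 2 ≤ n + x.2.val * n + (aLab n x.1 + fLab n (aLab n x.1)) ∧
      n + x.2.val * n + (aLab n x.1 + fLab n (aLab n x.1)) ≤ (n + n * k) + n / 2 + 1 := by
  have hA := aLab_mem hn ho x.1
  have hS := s2_mem hn ho hA.1 hA.2
  have hj : (x.2.val + 1) * n ≤ k * n := Nat.mul_le_mul_right n x.2.isLt
  have hkn : k * n = n * k := Nat.mul_comm k n
  have hexp : (x.2.val + 1) * n = x.2.val * n + n := by ring
  omega

lemma fe_mapsTo (hn : 3 ≤ n) (ho : n % 2 = 1) :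
    ∀ e ∈ EF n k, feL n k e ∈ Set.Icc ((n + n * k) + 1) ((n + n * k) + (n + n * k)) := by
  intro e he
  have hc := hc0 (k := k) hn ho
  rcases EF_cases he with ⟨i, rfl⟩ | ⟨x, rfl⟩
  · rw [fe_cyc_val hn ho]
    have hi := i.isLt
    rw [Set.mem_Icc]
    split_ifs <;> omega
  · rw [fe_pen_val hn ho]
    have := pen_sum_bounds hn ho x
    rw [Set.mem_Icc]
    omega

lemma fe_injOn (hn : 3 ≤ n) (ho : n % 2 = 1) :
    Set.InjOn (feL n k) ↑(EF n k) := by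
  intro e he e' he' h
  rw [Finset.mem_coe] at he he'
  have hc := hc0 (k := k) hn ho
  rcases EF_cases he with ⟨i, rfl⟩ | ⟨x, rfl⟩ <;>
    rcases EF_cases he' with ⟨i', rfl⟩ | ⟨x', rfl⟩
  · rw [fe_cyc_val hn ho, fe_cyc_val hn ho] at h
    have hi := i.isLt; have hi' := i'.isLt
    have : i = i' := by
      apply Fin.ext
      split_ifs at h <;> omega
    rw [this]
  · exfalso
    rw [fe_cyc_val hn ho, fe_pen_val hn ho] at h
    have hb := pen_sum_bounds hn ho x'
    have hi := i.isLt
    split_ifs at h <;> omega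
  · exfalso
    rw [fe_cyc_val hn ho, fe_pen_val hn ho] at h
    have hb := pen_sum_bounds hn ho x
    have hi := i'.isLt
    split_ifs at h <;> omega
  · rw [fe_pen_val hn ho, fe_pen_val hn ho] at h
    have hb := pen_sum_bounds hn ho x
    have hb' := pen_sum_bounds hn ho x'
    have hA := aLab_mem hn ho x.1
    have hA' := aLab_mem hn ho x'.1
    have hS := s2_mem hn ho hA.1 hA.2
    have hS' := s2_mem hn ho hA'.1 hA'.2
    have heq : n + x.2.val * n + (aLab n x.1 + fLab n (aLab n x.1)) =
        n + x'.2.val * n + (aLab n x'.1 + fLab n (aLab n x'.1)) := by omega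
    have h' : x.2.val * n + (aLab n x.1 + fLab n (aLab n x.1) - (n / 2 + 1)) =
        x'.2.val * n + (aLab n x'.1 + fLab n (aLab n x'.1) - (n / 2 + 1)) := by omega
    obtain ⟨hj, hv⟩ := block_eq (by omega) (by omega) (by omega) (by omega) (by omega) h'
    have hvv : aLab n x.1 + fLab n (aLab n x.1) = aLab n x'.1 + fLab n (aLab n x'.1) := by
      omega
    have hAA : aLab n x.1 = aLab n x'.1 := s2_inj hn ho hA.1 hA.2 hA'.1 hA'.2 hvv
    have hii : x.1 = x'.1 := aLab_inj hn ho hAA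
    have hx : x = x' := by
      obtain ⟨i1, j1⟩ := x; obtain ⟨i2, j2⟩ := x'
      simp only at hii hj
      subst hii
      simp only [Sigma.mk.inj_iff, heq_eq_eq, true_and]
      exact Fin.ext hj
    rw [hx]

lemma fe_bijOn (hn : 3 ≤ n) (ho : n % 2 = 1) :
    Set.BijOn (feL n k) ↑(EF n k)
      (Set.Icc ((n + n * k) + 1) ((n + n * k) + (n + n * k))) := by
  apply bijOn_helper
  · intro e he
    exact fe_mapsTo hn ho e (Finset.mem_coe.mp he)
  · exact fe_injOn hn ho
  · exact Set.finite_Icc _ _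
  · rw [← Finset.coe_Icc, Set.ncard_coe_finset, Nat.card_Icc, Set.ncard_coe_finset,
      EF_card hn]
    omega

lemma magic_holds (hn : 3 ≤ n) (ho : n % 2 = 1) (u v : Fin n ⊕ Σ _ : Fin n, Fin k)
    (huv : (pendantCycle n fun _ => k).Adj u v) :
    fvL n k u + fvL n k v + feL n k s(u, v) = c0 n k := by
  have hu := fv_mem hn ho u
  have hv := fv_mem hn ho v
  have hc := hc0 (k := k) hn ho
  rw [feL_mk]
  omega

end

section
variable {n k : ℕ}

lemma isSEMT_construction (hn : 3 ≤ n) (ho : n % 2 = 1) :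
    IsSEMT (pendantCycle n fun _ => k) (fvL n k) (feL n k) (c0 n k) := by
  have hedge := edgeSet_eq (k := k) hn
  have hncard : (pendantCycle n fun _ => k).edgeSet.ncard = n + n * k := by
    rw [hedge, Set.ncard_coe_finset, EF_card hn]
  refine ⟨?_, ?_, fun u v huv => magic_holds hn ho u v huv⟩
  · rw [cardV]
    exact fv_bijOn hn ho
  · rw [cardV, hncard, hedge]
    exact fe_bijOn hn ho

lemma Icc_eq_Ioc (a b : ℕ) : Finset.Icc (a + 1) b = Finset.Ioc a b := by
  ext x; simp only [Finset.mem_Icc, Finset.mem_Ioc]; omega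

lemma lower_bound (hn : 3 ≤ n) (ho : n % 2 = 1) (c : ℕ)
    (fv : (Fin n ⊕ Σ _ : Fin n, Fin k) → ℕ)
    (fe : Sym2 (Fin n ⊕ Σ _ : Fin n, Fin k) → ℕ)
    (h : IsSEMT (pendantCycle n fun _ => k) fv fe c) :
    2 * (n + n * k) + n / 2 + 2 ≤ c := by
  obtain ⟨h1, h2, h3⟩ := h
  set p := n + n * k with hp
  have hppos : 0 < p := by omega
  have hedge := edgeSet_eq (k := k) hn
  have hncard : (pendantCycle n fun _ => k).edgeSet.ncard = p := by
    rw [hedge, Set.ncard_coe_finset, EF_card hn]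
  rw [cardV] at h1 h2
  rw [hncard, hedge] at h2
  -- vertex sums
  set Sc := ∑ i : Fin n, fv (Sum.inl i) with hSc
  set Sp := ∑ x : Σ _ : Fin n, Fin k, fv (Sum.inr x) with hSp
  -- (1) total vertex sum
  have hall : Sc + Sp = ∑ x ∈ Finset.Ioc 0 p, x := by
    have hIcc : Set.Icc 1 p = ↑(Finset.Ioc 0 p) := by
      rw [← Icc_eq_Ioc, Finset.coe_Icc]
    rw [hIcc] at h1
    have := Finset.sum_nbij (s := Finset.univ) (t := Finset.Ioc 0 p)
      (f := fv) (g := fun x => x) fv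
      (fun a _ => h1.mapsTo (Set.mem_univ a))
      (by simpa using h1.injOn)
      (by simpa using h1.surjOn)
      (fun a _ => rfl)
    rw [← this, Fintype.sum_sum_type]
  -- (2) edge label sum
  have hfe : (∑ i : Fin n, fe (cycE n k i)) + ∑ x : Σ _ : Fin n, Fin k, fe (penE n k x)
      = ∑ x ∈ Finset.Ioc p (p + p), x := by
    have hIcc : Set.Icc (p + 1) (p + p) = ↑(Finset.Ioc p (p + p)) := by
      rw [← Icc_eq_Ioc, Finset.coe_Icc]
    rw [hIcc] at h2
    have := Finset.sum_nbij (s := EF n k) (t := Finset.Ioc p (p + p))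
      (f := fe) (g := fun x => x) fe
      (fun a ha => h2.mapsTo (Finset.mem_coe.mpr ha))
      (h2.injOn)
      (h2.surjOn)
      (fun a _ => rfl)
    rw [← this, sum_EF hn]
  -- (3) shift sum
  have hnxt_bij : Function.Bijective (nxt (n := n)) := by
    have hinj : Function.Injective (nxt (n := n)) := by
      intro i i' hii
      have e1 := congrArg Fin.val hii
      rw [nxt_val hn, nxt_val hn] at e1
      have := i.isLt; have := i'.isLt
      apply Fin.ext
      split_ifs at e1 <;> omega
    exact Finite.injective_iff_bijective.mp hinj
  have hshift : ∑ i : Fin n, fv (Sum.inl (nxt i)) = Sc :=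
    Fintype.sum_bijective nxt hnxt_bij (fun i => fv (Sum.inl (nxt i)))
      (fun j => fv (Sum.inl j)) (fun i => rfl)
  -- (4) sigma sum of cycle part
  have hsig : ∑ x : Σ _ : Fin n, Fin k, fv (Sum.inl x.1) = k * Sc := by
    rw [← Finset.univ_sigma_univ, Finset.sum_sigma]
    simp only [Finset.sum_const, Finset.card_univ, Fintype.card_fin, smul_eq_mul]
    rw [hSc, Finset.mul_sum]
  -- (5) per-edge equations
  have hc1 : Sc + Sc + ∑ i : Fin n, fe (cycE n k i) = n * c := by
    have step : ∀ i : Fin n, fv (Sum.inl i) + fv (Sum.inl (nxt i)) + fe (cycE n k i) = c :=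
      fun i => h3 _ _ (adj_cyc hn i)
    have := Finset.sum_congr rfl (fun i (_ : i ∈ Finset.univ) => step i)
    rw [Finset.sum_const, Finset.card_univ, Fintype.card_fin, smul_eq_mul] at this
    rw [← this, Finset.sum_add_distrib, Finset.sum_add_distrib, hshift]
  have hc2 : Sp + k * Sc + ∑ x : Σ _ : Fin n, Fin k, fe (penE n k x) = (n * k) * c := by
    have step : ∀ x : Σ _ : Fin n, Fin k,
        fv (Sum.inr x) + fv (Sum.inl x.1) + fe (penE n k x) = c :=
      fun x => h3 _ _ (adj_pen x)
    have := Finset.sum_congr rfl (fun x (_ : x ∈ Finset.univ) => step x)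
    rw [Finset.sum_const, Finset.card_univ, card_sigma_fin, smul_eq_mul] at this
    rw [← this, Finset.sum_add_distrib, Finset.sum_add_distrib, hsig]
  -- (6) cycle labels sum lower bound
  have hScLB : n * (n + 1) ≤ 2 * Sc := by
    have hfvinj : Function.Injective fv :=
      fun a b hab => h1.injOn (Set.mem_univ a) (Set.mem_univ b) hab
    have hinj : Function.Injective (fun i : Fin n => fv (Sum.inl i)) :=
      fun a b hab => Sum.inl.inj (hfvinj hab)
    set T := Finset.univ.image (fun i : Fin n => fv (Sum.inl i)) with hT
    have hTcard : T.card = n := by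
      rw [hT, Finset.card_image_of_injective _ hinj, Finset.card_univ, Fintype.card_fin]
    have hT1 : ∀ x ∈ T, 1 ≤ x := by
      intro x hx
      rw [hT, Finset.mem_image] at hx
      obtain ⟨i, _, rfl⟩ := hx
      exact (h1.mapsTo (Set.mem_univ _)).1
    have hTsum : ∑ x ∈ T, x = Sc := by
      rw [hT, Finset.sum_image (fun a _ b _ hab => hinj hab)]
    have := sum_ge T hT1
    rw [hTcard, hTsum] at this
    omega
  -- (7) Gauss sums
  set I0 := ∑ x ∈ Finset.Ioc 0 p, x with hI0
  set E1 := ∑ x ∈ Finset.Ioc p (p + p), x with hE1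
  set I2 := ∑ x ∈ Finset.Ioc 0 (p + p), x with hI2
  have g1 : 2 * I0 = p * (p + 1) := sum_Ioc_gauss p
  have g2 : I0 + E1 = I2 := Finset.sum_Ioc_consecutive _ (by omega) (by omega)
  have g3 : 2 * I2 = (p + p) * (p + p + 1) := sum_Ioc_gauss (p + p)
  -- (8) final arithmetic
  have e8' : p * (n + 1) ≤ 2 * ((k + 1) * Sc) := by
    calc p * (n + 1) = (k + 1) * (n * (n + 1)) := by rw [hp]; ring
      _ ≤ (k + 1) * (2 * Sc) := Nat.mul_le_mul_left _ hScLB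
      _ = 2 * ((k + 1) * Sc) := by ring
  have hx1 : (k + 1) * Sc = k * Sc + Sc := by ring
  have hrhs : n * c + n * k * c = p * c := by rw [hp]; ring
  have hQ2 : (p + p) * (p + p + 1) = 4 * (p * p) + 2 * p := by ring
  have hQ1 : p * (p + 1) = p * p + p := by ring
  have hT : p * (4 * p + n + 3) = 4 * (p * p) + p * n + 3 * p := by ring
  have hE : p * (n + 1) = p * n + p := by ring
  have h2c : p * (2 * c) = 2 * (p * c) := by ring
  have hkey : p * (4 * p + n + 3) ≤ p * (2 * c) := by
    linarith [hc1, hc2, hall, hfe, g1, g2, g3, e8', hx1, hrhs, hQ1, hQ2, hT, hE, h2c]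
  have := Nat.le_of_mul_le_mul_left hkey hppos
  omega

end

/-- For odd `n ≥ 3` and `k ≥ 0`, the unicyclic graph with `k` pendants at every vertex of the
cycle `Cₙ` has super edge-magic total strength `2n(k+1) + (n+3)/2`. -/
theorem stmt_8 (n k : ℕ) (hn : 3 ≤ n) (ho : Odd n) :
    sInf {c | ∃ fv fe, IsSEMT (pendantCycle n (fun _ => k)) fv fe c} =
      2 * n * (k + 1) + (n + 3) / 2 := by
  have ho' : n % 2 = 1 := Nat.odd_iff.mp ho
  have hmem : (2 * n * (k + 1) + (n + 3) / 2) ∈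
      {c | ∃ fv fe, IsSEMT (pendantCycle n (fun _ => k)) fv fe c} :=
    ⟨fvL n k, feL n k, isSEMT_construction hn ho'⟩
  refine le_antisymm (Nat.sInf_le hmem) (le_csInf ⟨_, hmem⟩ ?_)
  rintro c ⟨fv, fe, hsemt⟩
  have h := lower_bound hn ho' c fv fe hsemt
  have hkk : 2 * n * (k + 1) = 2 * (n + n * k) := by ring
  omega
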